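/- For the core tent map f with slope λ ∈ (√2, 2) and any backward orbit (x_r)_{r∈ℕ} (i.e., f(x_{r+1}) = x_r for all r), there are infinitely many indices r with x_r ≥ p, where p is the fixed point of f. In particular, since p > f(a), there are infinitely many r with x_r ∈ (f(a), b]. -/

import Mathlib

/-- For the core tent map of slope `λ ∈ (√2,2)` and any backward orbit `(x_r)` (so
`f(x_{r+1}) = x_r` for all `r`), infinitely many indices `r` have `x_r ≥ p`, where `p`
is the fixed point; in particular (since `p > f(a)`) infinitely many `r` have
`x_r ∈ (f(a), b]`. -/
theorem backward_orbit_often_above_fixed_point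
    (lam : ℝ) (hlam : lam ∈ Set.Ioo (Real.sqrt 2) 2)
    (T : ℝ → ℝ) (hT : ∀ x, T x = min (lam * x) (lam * (1 - x)))
    (a b p : ℝ)
    (ha : a = lam * (1 - lam / 2)) (hb : b = lam / 2)
    (hp : p = lam / (1 + lam))
    (x : ℕ → ℝ) (hmem : ∀ r, x r ∈ Set.Icc a b)
    (hback : ∀ r, T (x (r + 1)) = x r) :
    {r : ℕ | p ≤ x r}.Infinite ∧ {r : ℕ | x r ∈ Set.Ioc (T a) b}.Infinite := by
  obtain ⟨hl, hr⟩ := hlam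
  have hsq : Real.sqrt 2 ^ 2 = 2 := Real.sq_sqrt (by norm_num)
  have hsn : (0:ℝ) ≤ Real.sqrt 2 := Real.sqrt_nonneg 2
  have hlam1 : 1 < lam := by nlinarith
  have hlamsq : 2 < lam ^ 2 := by nlinarith
  have hlam0 : 0 < lam := by linarith
  have ha0 : 0 < a := by rw [ha]; nlinarith
  have hpadd : (0:ℝ) < 1 + lam := by linarith
  have hpval : lam * (1 - p) = p := by rw [hp]; field_simp; ring
  have hahalf : a < 1/2 := by rw [ha]; nlinarith [sq_nonneg (lam - 1)]
  have hTa : T a = lam * a := by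
    rw [hT a, min_eq_left]; nlinarith
  have hTap : T a < p := by
    rw [hTa, hp, lt_div_iff₀ hpadd, ha]
    nlinarith
  have key : {r : ℕ | p ≤ x r}.Infinite := by
    by_contra hfin
    rw [Set.not_infinite] at hfin
    obtain ⟨N, hN⟩ := hfin.bddAbove
    have hlt : ∀ r, N < r → x r < p := by
      intro r hrN
      by_contra h
      push_neg at h
      have : r ≤ N := hN h
      omega
    have hstep : ∀ r, N < r → x r = lam * x (r + 1) := by
      intro r hrN
      have h1 := hlt r hrN
      have h2 := hlt (r + 1) (by omega)
      have hx := hback r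
      rw [hT] at hx
      by_cases hc : x (r + 1) ≤ 1/2
      · rw [← hx, min_eq_left]; nlinarith
      · push_neg at hc
        exfalso
        have hxr : x r = lam * (1 - x (r + 1)) := by
          rw [← hx, min_eq_right]; nlinarith
        nlinarith
    have hpow : ∀ k, x (N + 1) = lam ^ k * x (N + 1 + k) := by
      intro k
      induction k with
      | zero => simp
      | succ k ih =>
        have he : N + 1 + (k + 1) = (N + 1 + k) + 1 := by omega
        rw [he, ih, hstep (N + 1 + k) (by omega), pow_succ]
        ring
    obtain ⟨k, hk⟩ := pow_unbounded_of_one_lt (b / a) hlam1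
    have hk' : b < lam ^ k * a := by
      rw [div_lt_iff₀ ha0] at hk; linarith
    have h1 := (hmem (N + 1 + k)).1
    have h2 := (hmem (N + 1)).2
    have hpk : (0:ℝ) < lam ^ k := pow_pos hlam0 k
    have : lam ^ k * a ≤ x (N + 1) := by
      rw [hpow k]
      exact mul_le_mul_of_nonneg_left h1 (le_of_lt hpk)
    linarith
  refine ⟨key, key.mono ?_⟩
  intro r hrp
  exact ⟨lt_of_lt_of_le hTap hrp, (hmem r).2⟩
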